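/- Let g ≥ 1. Then N · N^T = 2^{g−1} ( 2^g · I − M^+ ), where I is the identity matrix of size k_g^+. -/

import Mathlib

open scoped BigOperators
open Matrix

/-- The quadratic form `Σ_{i=1}^g x_i x_{g+i}` on `𝔽_2^{2g}`, with `𝔽_2^{2g}`
realized as pairs `(x_1,…,x_g), (x_{g+1},…,x_{2g})`. -/
def Qf {g : ℕ} (x : (Fin g → ZMod 2) × (Fin g → ZMod 2)) : ZMod 2 :=
  ∑ i, x.1 i * x.2 i

/-- The `4^g × 4^g` matrix `M(g)` with entry
`M_{m,n} = (−1)^{Σ_i (m_i n_{g+i} + n_i m_{g+i})}` (exponent computed using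
the representatives in `{0,1}`). -/
def Mmat (g : ℕ) :
    Matrix ((Fin g → ZMod 2) × (Fin g → ZMod 2)) ((Fin g → ZMod 2) × (Fin g → ZMod 2)) ℝ :=
  fun m n => (-1 : ℝ) ^ (∑ i, ((m.1 i).val * (n.2 i).val + (n.1 i).val * (m.2 i).val))

/-- `M⁺`, the principal submatrix of `M(g)` indexed by `K_g^+ × K_g^+`. -/
def Mplus (g : ℕ) :
    Matrix {x : (Fin g → ZMod 2) × (Fin g → ZMod 2) // Qf x = 0}
      {x : (Fin g → ZMod 2) × (Fin g → ZMod 2) // Qf x = 0} ℝ :=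
  fun m n => Mmat g m.1 n.1

/-- `M⁻`, the principal submatrix of `M(g)` indexed by `K_g^− × K_g^−`. -/
def Mminus (g : ℕ) :
    Matrix {x : (Fin g → ZMod 2) × (Fin g → ZMod 2) // Qf x = 1}
      {x : (Fin g → ZMod 2) × (Fin g → ZMod 2) // Qf x = 1} ℝ :=
  fun m n => Mmat g m.1 n.1

/-- `N`, the submatrix of `M(g)` indexed by `K_g^+ × K_g^−`. -/
def Nmat (g : ℕ) :
    Matrix {x : (Fin g → ZMod 2) × (Fin g → ZMod 2) // Qf x = 0}
      {x : (Fin g → ZMod 2) × (Fin g → ZMod 2) // Qf x = 1} ℝ :=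
  fun m n => Mmat g m.1 n.1

/- ### auxiliary development -/

noncomputable def chi (t : ZMod 2) : ℝ := (-1 : ℝ) ^ t.val

lemma chi_zero : chi 0 = 1 := rfl

lemma chi_one : chi 1 = -1 := by
  simp [chi, show ZMod.val (1 : ZMod 2) = 1 from rfl]

lemma zmod2_cases (a : ZMod 2) : a = 0 ∨ a = 1 := by
  revert a; decide

lemma chi_add (a b : ZMod 2) : chi (a + b) = chi a * chi b := by
  rcases zmod2_cases a with rfl | rfl <;> rcases zmod2_cases b with rfl | rfl <;>
    simp [chi, show ((1:ZMod 2)+1) = 0 from rfl, show ZMod.val (1 : ZMod 2) = 1 from rfl]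

lemma chi_natCast (n : ℕ) : ((-1 : ℝ)) ^ n = chi (n : ZMod 2) := by
  rw [chi, ZMod.val_natCast, neg_one_pow_eq_pow_mod_two]

lemma chi_sum {ι : Type*} (s : Finset ι) (f : ι → ZMod 2) :
    chi (∑ i ∈ s, f i) = ∏ i ∈ s, chi (f i) := by
  classical
  induction s using Finset.induction with
  | empty => simp [chi_zero]
  | insert _ _ h ih => rw [Finset.sum_insert h, Finset.prod_insert h, chi_add, ih]

lemma sum_zmod2 (f : ZMod 2 → ℝ) : ∑ a : ZMod 2, f a = f 0 + f 1 := by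
  rw [show ((Finset.univ : Finset (ZMod 2))) = {0, 1} by decide]
  simp

lemma natCast_val_self (a : ZMod 2) : ((a.val : ℕ) : ZMod 2) = a := by
  fin_cases a <;> rfl

/-- The symplectic pairing. -/
def Bf {g : ℕ} (m n : (Fin g → ZMod 2) × (Fin g → ZMod 2)) : ZMod 2 :=
  ∑ i, (m.1 i * n.2 i + n.1 i * m.2 i)

lemma Mmat_eq {g : ℕ} (m n : (Fin g → ZMod 2) × (Fin g → ZMod 2)) :
    Mmat g m n = chi (Bf m n) := by
  rw [Mmat, chi_natCast, Bf]
  congr 1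
  push_cast [natCast_val_self]
  rfl

lemma Bf_add_left {g : ℕ} (a b x : (Fin g → ZMod 2) × (Fin g → ZMod 2)) :
    Bf (a + b) x = Bf a x + Bf b x := by
  simp only [Bf, Prod.fst_add, Prod.snd_add, Pi.add_apply]
  rw [← Finset.sum_add_distrib]
  apply Finset.sum_congr rfl
  intros; ring

lemma Qf_add {g : ℕ} (a b : (Fin g → ZMod 2) × (Fin g → ZMod 2)) :
    Qf (a + b) = Qf a + Qf b + Bf a b := by
  simp only [Qf, Bf, Prod.fst_add, Prod.snd_add, Pi.add_apply]
  rw [← Finset.sum_add_distrib, ← Finset.sum_add_distrib]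
  apply Finset.sum_congr rfl
  intros; ring

/-- pointwise sum, lemma (a) -/
lemma point_a (u v : ZMod 2) :
    ∑ p : ZMod 2 × ZMod 2, chi (u * p.2 + p.1 * v) = if u = 0 ∧ v = 0 then 4 else 0 := by
  rw [Fintype.sum_prod_type]
  rcases zmod2_cases u with rfl | rfl <;> rcases zmod2_cases v with rfl | rfl <;>
    simp [sum_zmod2, chi_zero, chi_one, chi_add] <;> norm_num

/-- pointwise sum, lemma (b) -/
lemma point_b (u v : ZMod 2) :
    ∑ p : ZMod 2 × ZMod 2, chi (p.1 * p.2 + (u * p.2 + p.1 * v)) = 2 * chi (u * v) := by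
  rw [Fintype.sum_prod_type]
  rcases zmod2_cases u with rfl | rfl <;> rcases zmod2_cases v with rfl | rfl <;>
    simp [sum_zmod2, chi_zero, chi_one, chi_add,
      show ((1:ZMod 2)+1) = 0 from rfl] <;> norm_num

lemma factor_sum {g : ℕ} (h : Fin g → ZMod 2 → ZMod 2 → ℝ) :
    ∑ x : (Fin g → ZMod 2) × (Fin g → ZMod 2), ∏ i, h i (x.1 i) (x.2 i)
      = ∏ i, ∑ p : ZMod 2 × ZMod 2, h i p.1 p.2 := by
  rw [Fintype.prod_sum (fun i (p : ZMod 2 × ZMod 2) => h i p.1 p.2)]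
  exact Fintype.sum_equiv (Equiv.arrowProdEquivProdArrow (Fin g) (fun _ => ZMod 2) (fun _ => ZMod 2)).symm _ _
    (fun x => rfl)

lemma sum_chi_B {g : ℕ} (c : (Fin g → ZMod 2) × (Fin g → ZMod 2)) :
    ∑ x : (Fin g → ZMod 2) × (Fin g → ZMod 2), chi (Bf c x)
      = if c = 0 then (4 : ℝ) ^ g else 0 := by
  have : ∀ x : (Fin g → ZMod 2) × (Fin g → ZMod 2),
      chi (Bf c x) = ∏ i, chi (c.1 i * x.2 i + x.1 i * c.2 i) := fun x => chi_sum _ _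
  rw [Fintype.sum_congr _ _ this,
    factor_sum (fun i a b => chi (c.1 i * b + a * c.2 i))]
  have hpt : ∀ i, (∑ p : ZMod 2 × ZMod 2, chi (c.1 i * p.2 + p.1 * c.2 i))
      = if c.1 i = 0 ∧ c.2 i = 0 then (4:ℝ) else 0 := fun i => point_a _ _
  rw [Finset.prod_congr rfl (fun i _ => hpt i)]
  by_cases hc : c = 0
  · subst hc; simp
  · rw [if_neg hc]
    have : ∃ i, ¬ (c.1 i = 0 ∧ c.2 i = 0) := by
      by_contra hall
      push_neg at hall
      exact hc (Prod.ext (funext fun i => (hall i).1) (funext fun i => (hall i).2))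
    obtain ⟨i, hi⟩ := this
    exact Finset.prod_eq_zero (Finset.mem_univ i) (if_neg hi)

lemma sum_chi_QB {g : ℕ} (c : (Fin g → ZMod 2) × (Fin g → ZMod 2)) :
    ∑ x : (Fin g → ZMod 2) × (Fin g → ZMod 2), chi (Qf x + Bf c x)
      = (2 : ℝ) ^ g * chi (Qf c) := by
  have : ∀ x : (Fin g → ZMod 2) × (Fin g → ZMod 2),
      chi (Qf x + Bf c x) = ∏ i, chi (x.1 i * x.2 i + (c.1 i * x.2 i + x.1 i * c.2 i)) := by
    intro x
    rw [show Qf x + Bf c x = ∑ i, (x.1 i * x.2 i + (c.1 i * x.2 i + x.1 i * c.2 i)) by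
      rw [Qf, Bf, ← Finset.sum_add_distrib]]
    exact chi_sum _ _
  rw [Fintype.sum_congr _ _ this,
    factor_sum (fun i a b => chi (a * b + (c.1 i * b + a * c.2 i)))]
  have hpt : ∀ i, (∑ p : ZMod 2 × ZMod 2, chi (p.1 * p.2 + (c.1 i * p.2 + p.1 * c.2 i)))
      = 2 * chi (c.1 i * c.2 i) := fun i => point_b _ _
  rw [Finset.prod_congr rfl (fun i _ => hpt i), Finset.prod_mul_distrib, ← chi_sum]
  simp [Qf]

lemma not_eq_zero_iff (a : ZMod 2) : ¬ a = 0 ↔ a = 1 := by revert a; decide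

lemma sum_split {g : ℕ} (f : (Fin g → ZMod 2) × (Fin g → ZMod 2) → ℝ) :
    ∑ x : (Fin g → ZMod 2) × (Fin g → ZMod 2), f x
      = (∑ x : {x : (Fin g → ZMod 2) × (Fin g → ZMod 2) // Qf x = 0}, f x.1)
        + ∑ x : {x : (Fin g → ZMod 2) × (Fin g → ZMod 2) // Qf x = 1}, f x.1 := by
  classical
  rw [← Finset.sum_filter_add_sum_filter_not Finset.univ (fun x => Qf x = 0) f]
  congr 1
  · exact (Finset.sum_subtype _ (by simp) f)
  · refine (Finset.sum_subtype _ (fun x => ?_) f)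
    simp [not_eq_zero_iff]


/-- `N · Nᵀ = 2^{g−1}(2^g · I − M⁺)`. -/
theorem Nmat_mul_transpose (g : ℕ) (hg : 1 ≤ g) :
    Nmat g * (Nmat g)ᵀ = (2 : ℝ) ^ (g - 1) • ((2 : ℝ) ^ g • 1 - Mplus g) := by
  have h2g : (2 : ℝ) ^ g = 2 * 2 ^ (g - 1) := by
    rw [← pow_succ']
    congr 1
    omega
  have h4g : (4 : ℝ) ^ g = 2 ^ g * 2 ^ g := by
    rw [← mul_pow]; norm_num
  ext m n
  set c := m.1 + n.1 with hc
  -- the two key sums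
  have hA := sum_chi_B c
  have hG := sum_chi_QB c
  rw [sum_split (fun x => chi (Bf c x))] at hA
  have hGsplit : ∑ x : (Fin g → ZMod 2) × (Fin g → ZMod 2), chi (Qf x + Bf c x)
      = (∑ x : {x : (Fin g → ZMod 2) × (Fin g → ZMod 2) // Qf x = 0}, chi (Bf c x.1))
        - ∑ x : {x : (Fin g → ZMod 2) × (Fin g → ZMod 2) // Qf x = 1}, chi (Bf c x.1) := by
    rw [sum_split (fun x => chi (Qf x + Bf c x))]
    rw [sub_eq_add_neg, ← Finset.sum_neg_distrib]
    congr 1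
    · exact Finset.sum_congr rfl fun x _ => by rw [x.2, zero_add]
    · exact Finset.sum_congr rfl fun x _ => by rw [x.2, chi_add, chi_one]; ring
  rw [hGsplit] at hG
  -- LHS entry
  have hL : (Nmat g * (Nmat g)ᵀ) m n
      = ∑ x : {x : (Fin g → ZMod 2) × (Fin g → ZMod 2) // Qf x = 1}, chi (Bf c x.1) := by
    rw [Matrix.mul_apply]
    apply Finset.sum_congr rfl
    intro x _
    rw [Matrix.transpose_apply, Nmat, Nmat, Mmat_eq, Mmat_eq, ← chi_add, hc, Bf_add_left]
  -- Qf c = Bf m.1 n.1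
  have hQc : Qf c = Bf m.1 n.1 := by
    rw [hc, Qf_add, m.2, n.2, zero_add, zero_add]
  -- c = 0 ↔ m = n
  have hself : ∀ x : (Fin g → ZMod 2) × (Fin g → ZMod 2), x + x = 0 :=
    fun x => Prod.ext (funext fun i => CharTwo.add_self_eq_zero _)
      (funext fun i => CharTwo.add_self_eq_zero _)
  have hc0 : (c = 0) ↔ m = n := by
    rw [hc]
    constructor
    · intro h
      have : m.1 = n.1 := by
        have h2 := congrArg (· + n.1) h
        simpa [add_assoc, hself n.1] using h2
      exact Subtype.ext this
    · intro h; rw [h]; exact hself n.1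
  -- RHS entry
  have hR : ((2 : ℝ) ^ (g - 1) • ((2 : ℝ) ^ g • 1 - Mplus g)) m n
      = 2 ^ (g - 1) * (2 ^ g * (if m = n then (1:ℝ) else 0) - chi (Bf m.1 n.1)) := by
    simp [Matrix.smul_apply, Matrix.sub_apply, Matrix.one_apply, Mplus, Mmat_eq]
  rw [hL, hR, ← hQc,
    show (if m = n then (1:ℝ) else 0) = if c = 0 then 1 else 0 from (if_congr hc0.symm rfl rfl)]
  by_cases h : c = 0
  · rw [if_pos h] at hA ⊢
    have hq1 : chi (Qf c) = 1 := by rw [h]; simp [Qf, chi_zero]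
    rw [hq1] at hG ⊢
    rw [h4g] at hA
    rw [h2g] at hA hG ⊢
    linear_combination (hA - hG) / 2
  · rw [if_neg h] at hA ⊢
    rw [h2g] at hG ⊢
    linear_combination (hA - hG) / 2
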